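/- For every n ∈ ℕ, ∫_{−∞}^{+∞} e^{−t²/2} H_n(t) dt = 2^{n/2} (n−1)!! √(2π) if n is even, and ∫_{−∞}^{+∞} e^{−t²/2} H_n(t) dt = 0 if n is odd. -/

import Mathlib

/-- The Hermite polynomials `H_n(x) = (-1)^n e^{x²} (d/dx)^n e^{-x²}`. -/
noncomputable def hermiteH (n : ℕ) (x : ℝ) : ℝ :=
  (-1 : ℝ) ^ n * Real.exp (x ^ 2) * iteratedDeriv n (fun y => Real.exp (-y ^ 2)) x

open Polynomial MeasureTheory Filter Real

/-- Physicists' Hermite polynomials as `Polynomial ℝ`. -/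
noncomputable def physH : ℕ → Polynomial ℝ
  | 0 => 1
  | n + 1 => C 2 * X * physH n - derivative (physH n)

lemma physH_zero : physH 0 = 1 := rfl

lemma physH_succ (n : ℕ) :
    physH (n + 1) = C 2 * X * physH n - derivative (physH n) := rfl

lemma hasDerivAt_gauss (x : ℝ) :
    HasDerivAt (fun y : ℝ => Real.exp (-y ^ 2 / 2)) (-x * Real.exp (-x ^ 2 / 2)) x := by
  have h1 : HasDerivAt (fun y : ℝ => -y ^ 2 / 2) (-x) x := by
    have := ((hasDerivAt_pow 2 x).neg).div_const 2
    refine this.congr_deriv ?_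
    ring
  simpa [mul_comm] using h1.exp

lemma hasDerivAt_gauss2 (x : ℝ) :
    HasDerivAt (fun y : ℝ => Real.exp (-y ^ 2)) (-2 * x * Real.exp (-x ^ 2)) x := by
  have h1 : HasDerivAt (fun y : ℝ => -y ^ 2) (-(2 * x)) x := by
    have := (hasDerivAt_pow 2 x).neg
    refine this.congr_deriv ?_
    ring
  simpa [mul_comm] using h1.exp

lemma iteratedDeriv_gauss (n : ℕ) (x : ℝ) :
    iteratedDeriv n (fun y => Real.exp (-y ^ 2)) x
      = (-1 : ℝ) ^ n * eval x (physH n) * Real.exp (-x ^ 2) := by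
  induction n generalizing x with
  | zero => simp [physH_zero]
  | succ n ih =>
    have ih' : iteratedDeriv n (fun y => Real.exp (-y ^ 2))
        = fun x => (-1 : ℝ) ^ n * eval x (physH n) * Real.exp (-x ^ 2) := funext ih
    rw [iteratedDeriv_succ, ih']
    have h : HasDerivAt (fun x : ℝ => (-1 : ℝ) ^ n * eval x (physH n) * Real.exp (-x ^ 2))
        (((-1 : ℝ) ^ n * eval x (derivative (physH n))) * Real.exp (-x ^ 2)
          + ((-1 : ℝ) ^ n * eval x (physH n)) * (-2 * x * Real.exp (-x ^ 2))) x := by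
      exact (((physH n).hasDerivAt x).const_mul ((-1 : ℝ) ^ n)).mul (hasDerivAt_gauss2 x)
    rw [h.deriv, physH_succ]
    simp only [eval_sub, eval_mul, eval_C, eval_X, pow_succ]
    ring

lemma hermiteH_eq (n : ℕ) (x : ℝ) : hermiteH n x = eval x (physH n) := by
  rw [hermiteH, iteratedDeriv_gauss]
  have h : Real.exp (x ^ 2) * Real.exp (-x ^ 2) = 1 := by
    rw [← Real.exp_add]; simp
  have h2 : ((-1 : ℝ) ^ n) * ((-1 : ℝ) ^ n) = 1 := by
    rw [← pow_add, ← two_mul, pow_mul]; norm_num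
  calc (-1 : ℝ) ^ n * Real.exp (x ^ 2) * ((-1 : ℝ) ^ n * eval x (physH n) * Real.exp (-x ^ 2))
      = ((-1 : ℝ) ^ n * (-1 : ℝ) ^ n) * (Real.exp (x ^ 2) * Real.exp (-x ^ 2))
          * eval x (physH n) := by ring
    _ = eval x (physH n) := by rw [h, h2]; ring

lemma derivative_physH (n : ℕ) :
    derivative (physH n) = C (2 * (n : ℝ)) * physH (n - 1) := by
  induction n with
  | zero => simp [physH_zero]
  | succ n ih =>
    rw [physH_succ, derivative_sub, derivative_mul, derivative_mul, derivative_C,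
      derivative_X, ih, derivative_mul, derivative_C]
    cases n with
    | zero => simp [physH_zero]
    | succ m =>
      simp only [Nat.add_sub_cancel]
      rw [physH_succ m]
      push_cast
      rw [show (C (2 * ((m : ℝ) + 1 + 1)) : Polynomial ℝ)
            = C 2 + C (2 * ((m : ℝ) + 1)) from by rw [← C_add]; ring_nf]
      ring

lemma gauss_pow_bound (k : ℕ) (t : ℝ) :
    |t| ^ k * Real.exp (-t ^ 2 / 2)
      ≤ ((k.factorial : ℝ) * Real.exp 1) * Real.exp (-(1/4) * t ^ 2) := by
  have h1 : |t| ^ k ≤ (k.factorial : ℝ) * Real.exp |t| := by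
    have := Real.pow_div_factorial_le_exp (x := |t|) (abs_nonneg t) k
    rw [div_le_iff₀ (by positivity : (0:ℝ) < k.factorial)] at this
    linarith [this]
  have h2 : Real.exp |t| * Real.exp (-t ^ 2 / 2)
      ≤ Real.exp 1 * Real.exp (-(1/4) * t ^ 2) := by
    rw [← Real.exp_add, ← Real.exp_add]
    apply Real.exp_le_exp.2
    nlinarith [sq_nonneg (|t| - 2), sq_abs t]
  calc |t| ^ k * Real.exp (-t ^ 2 / 2)
      ≤ ((k.factorial : ℝ) * Real.exp |t|) * Real.exp (-t ^ 2 / 2) := by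
        apply mul_le_mul_of_nonneg_right h1 (Real.exp_pos _).le
    _ = (k.factorial : ℝ) * (Real.exp |t| * Real.exp (-t ^ 2 / 2)) := by ring
    _ ≤ (k.factorial : ℝ) * (Real.exp 1 * Real.exp (-(1/4) * t ^ 2)) := by
        apply mul_le_mul_of_nonneg_left h2 (by positivity)
    _ = ((k.factorial : ℝ) * Real.exp 1) * Real.exp (-(1/4) * t ^ 2) := by ring

lemma integrable_pow_gauss (k : ℕ) :
    Integrable fun t : ℝ => t ^ k * Real.exp (-t ^ 2 / 2) := by
  refine ((integrable_exp_neg_mul_sq (by norm_num : (0:ℝ) < 1/4)).const_mul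
    ((k.factorial : ℝ) * Real.exp 1)).mono' ?_ ?_
  · exact ((continuous_pow k).mul (by continuity)).aestronglyMeasurable
  · filter_upwards with t
    have := gauss_pow_bound k t
    rw [norm_mul, norm_pow, Real.norm_eq_abs, Real.norm_eq_abs,
      abs_of_pos (Real.exp_pos _)]
    simpa [neg_mul] using this

lemma integrable_gauss_poly (p : Polynomial ℝ) :
    Integrable fun t : ℝ => Real.exp (-t ^ 2 / 2) * eval t p := by
  induction p using Polynomial.induction_on' with
  | add p q hp hq =>
    simp only [eval_add, mul_add]
    exact hp.add hq
  | monomial k a =>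
    simp only [eval_monomial]
    have h := (integrable_pow_gauss k).const_mul a
    apply h.congr
    filter_upwards with t
    ring

lemma tendsto_gauss_poly {l : Filter ℝ} (hl : Tendsto (fun t : ℝ => t ^ 2) l atTop)
    (p : Polynomial ℝ) :
    Tendsto (fun t : ℝ => Real.exp (-t ^ 2 / 2) * eval t p) l (nhds 0) := by
  have hexp : Tendsto (fun t : ℝ => Real.exp (-(1/4) * t ^ 2)) l (nhds 0) := by
    apply Real.tendsto_exp_atBot.comp
    have : Tendsto (fun t : ℝ => -(1/4) * t ^ 2) l atBot := by
      apply Tendsto.const_mul_atTop_of_neg (by norm_num : (-(1/4) : ℝ) < 0) hl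
    exact this
  induction p using Polynomial.induction_on' with
  | add p q hp hq =>
    simp only [eval_add, mul_add]
    simpa using hp.add hq
  | monomial k a =>
    simp only [eval_monomial]
    apply squeeze_zero_norm (a := fun t => (|a| * ((k.factorial : ℝ) * Real.exp 1))
      * Real.exp (-(1/4) * t ^ 2))
    · intro t
      have hb := gauss_pow_bound k t
      rw [norm_mul, norm_mul, norm_pow, Real.norm_eq_abs, Real.norm_eq_abs,
        Real.norm_eq_abs, abs_of_pos (Real.exp_pos _)]
      calc Real.exp (-t ^ 2 / 2) * (|a| * |t| ^ k)
          = |a| * (|t| ^ k * Real.exp (-t ^ 2 / 2)) := by ring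
        _ ≤ |a| * (((k.factorial : ℝ) * Real.exp 1) * Real.exp (-(1/4) * t ^ 2)) := by
            apply mul_le_mul_of_nonneg_left hb (abs_nonneg a)
        _ = (|a| * ((k.factorial : ℝ) * Real.exp 1)) * Real.exp (-(1/4) * t ^ 2) := by ring
    · simpa using hexp.const_mul _

/-- The integral of `e^{-t²/2}` against a polynomial. -/
noncomputable def Ig (p : Polynomial ℝ) : ℝ :=
  ∫ t : ℝ, Real.exp (-t ^ 2 / 2) * eval t p

lemma hasDerivAt_gauss_poly (p : Polynomial ℝ) (t : ℝ) :
    HasDerivAt (fun t : ℝ => Real.exp (-t ^ 2 / 2) * eval t p)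
      (Real.exp (-t ^ 2 / 2) * eval t (derivative p - X * p)) t := by
  have h := (hasDerivAt_gauss t).mul (p.hasDerivAt t)
  refine h.congr_deriv ?_
  simp only [eval_sub, eval_mul, eval_X]
  ring

lemma tendsto_sq_atTop : Tendsto (fun t : ℝ => t ^ 2) atTop atTop :=
  tendsto_pow_atTop two_ne_zero

lemma tendsto_sq_atBot : Tendsto (fun t : ℝ => t ^ 2) atBot atTop := by
  have := tendsto_sq_atTop.comp tendsto_neg_atBot_atTop
  simpa [Function.comp_def] using this

lemma Ig_derivative (p : Polynomial ℝ) : Ig (derivative p) = Ig (X * p) := by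
  set q := derivative p - X * p with hq
  have hint : Integrable fun t : ℝ => Real.exp (-t ^ 2 / 2) * eval t q :=
    integrable_gauss_poly _
  have h1 : (∫ t in Set.Iic (0 : ℝ), Real.exp (-t ^ 2 / 2) * eval t q)
      = Real.exp (-(0 : ℝ) ^ 2 / 2) * eval 0 p - 0 :=
    integral_Iic_of_hasDerivAt_of_tendsto' (fun x _ => hasDerivAt_gauss_poly p x)
      hint.integrableOn (tendsto_gauss_poly tendsto_sq_atBot p)
  have h2 : (∫ t in Set.Ioi (0 : ℝ), Real.exp (-t ^ 2 / 2) * eval t q)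
      = 0 - Real.exp (-(0 : ℝ) ^ 2 / 2) * eval 0 p :=
    integral_Ioi_of_hasDerivAt_of_tendsto' (fun x _ => hasDerivAt_gauss_poly p x)
      hint.integrableOn (tendsto_gauss_poly tendsto_sq_atTop p)
  have h3 : (∫ t : ℝ, Real.exp (-t ^ 2 / 2) * eval t q) = 0 := by
    rw [← intervalIntegral.integral_Iic_add_Ioi (b := (0 : ℝ)) hint.integrableOn hint.integrableOn, h1, h2]
    ring
  have h4 : (∫ t : ℝ, Real.exp (-t ^ 2 / 2) * eval t q) = Ig (derivative p) - Ig (X * p) := by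
    simp only [Ig, hq, eval_sub, mul_sub]
    exact integral_sub (integrable_gauss_poly _) (integrable_gauss_poly _)
  rw [h3] at h4
  linarith

lemma Ig_C_mul (a : ℝ) (p : Polynomial ℝ) : Ig (C a * p) = a * Ig p := by
  simp only [Ig, eval_mul, eval_C]
  rw [← integral_const_mul]
  congr 1
  funext t
  ring

lemma Ig_sub (p q : Polynomial ℝ) : Ig (p - q) = Ig p - Ig q := by
  simp only [Ig, eval_sub, mul_sub]
  exact integral_sub (integrable_gauss_poly _) (integrable_gauss_poly _)

lemma Ig_physH_rec (n : ℕ) :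
    Ig (physH (n + 2)) = 2 * (n + 1 : ℝ) * Ig (physH n) := by
  have h1 : Ig (physH (n + 2)) = 2 * Ig (X * physH (n + 1)) - Ig (derivative (physH (n + 1))) := by
    rw [physH_succ (n + 1), Ig_sub, mul_assoc, Ig_C_mul]
  rw [h1, ← Ig_derivative, derivative_physH (n + 1), Nat.add_sub_cancel, Ig_C_mul]
  push_cast
  ring

lemma Ig_physH_zero : Ig (physH 0) = Real.sqrt (2 * Real.pi) := by
  have h : ∀ t : ℝ, -t ^ 2 / 2 = -(1/2) * t ^ 2 := fun t => by ring
  simp only [Ig, physH_zero, eval_one, mul_one]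
  simp_rw [h]
  rw [integral_gaussian, show Real.pi / (1/2) = 2 * Real.pi by ring]

lemma Ig_physH_one : Ig (physH 1) = 0 := by
  have h : physH 1 = C 2 * (X * physH 0) - derivative (physH 0) := by
    rw [physH_succ, mul_assoc]
  rw [h, Ig_sub, Ig_C_mul, ← Ig_derivative, physH_zero]
  simp [Ig]

lemma Ig_physH_even (m : ℕ) :
    Ig (physH (2 * m)) = 2 ^ m * (Nat.doubleFactorial (2 * m - 1) : ℝ) * Real.sqrt (2 * Real.pi) := by
  induction m with
  | zero => simpa [Nat.doubleFactorial] using Ig_physH_zero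
  | succ m ih =>
    have h2 : 2 * (m + 1) = 2 * m + 2 := by ring
    rw [h2, Ig_physH_rec, ih]
    have hd : (Nat.doubleFactorial (2 * m + 2 - 1) : ℝ)
        = (2 * m + 1 : ℝ) * (Nat.doubleFactorial (2 * m - 1) : ℝ) := by
      cases m with
      | zero => simp [Nat.doubleFactorial]
      | succ k =>
        have h3 : 2 * (k + 1) + 2 - 1 = (2 * (k + 1) - 1) + 2 := by omega
        rw [h3, Nat.doubleFactorial]
        push_cast
        have h4 : (2 * (k + 1) - 1 : ℕ) = 2 * k + 1 := by omega
        rw [h4]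
        push_cast
        ring
    rw [hd]
    push_cast
    ring

lemma Ig_physH_odd (m : ℕ) : Ig (physH (2 * m + 1)) = 0 := by
  induction m with
  | zero => exact Ig_physH_one
  | succ m ih =>
    have h2 : 2 * (m + 1) + 1 = (2 * m + 1) + 2 := by ring
    rw [h2, Ig_physH_rec, ih, mul_zero]

/-- `∫_{-∞}^{∞} e^{-t²/2} H_n(t) dt = 2^{n/2}(n-1)!!√(2π)` for even `n`, `0` for odd. -/
theorem integral_gaussian_hermite_total (n : ℕ) :
    (Even n → (∫ t : ℝ, Real.exp (-t ^ 2 / 2) * hermiteH n t)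
        = (2 : ℝ) ^ (n / 2) * (Nat.doubleFactorial (n - 1) : ℝ) * Real.sqrt (2 * Real.pi)) ∧
    (Odd n → (∫ t : ℝ, Real.exp (-t ^ 2 / 2) * hermiteH n t) = 0) := by
  have hIg : (∫ t : ℝ, Real.exp (-t ^ 2 / 2) * hermiteH n t) = Ig (physH n) := by
    simp_rw [Ig, hermiteH_eq]
  constructor
  · rintro ⟨m, rfl⟩
    have hn : m + m = 2 * m := by ring
    rw [hIg, hn, show (2 * m) / 2 = m from by omega]
    exact Ig_physH_even m
  · rintro ⟨m, rfl⟩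
    rw [hIg, Ig_physH_odd m]
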